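/- arXiv:1201.3548 — 2 statements merged into one kernel-verified Lean document; each statement's English description precedes it below -/
import Mathlib

section
/- Let a = (a_1, a_2, …) be a sequence in which each a_m is the reciprocal of an odd integer at least 3, let S_a ⊂ ℝ² be the associated carpet with natural measure μ. Then: (i) μ is a doubling measure on S_a, with doubling constant independent of a; and (ii) there is an absolute constant c > 0 such that μ(B(x,r)) ≥ c r² for every x ∈ S_a and every 0 < r ≤ 1. -/
open MeasureTheory Metric Set Filter
open scoped ENNReal NNReal Topology

noncomputable section

abbrev Plane : Type := EuclideanSpace ℝ (Fin 2)

/-- `a` is a sequence of reciprocals of odd integers at least 3. -/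
def GoodSeq (a : ℕ → ℝ) : Prop := ∀ m, ∃ k : ℕ, 1 ≤ k ∧ a m = ((2 * k + 1 : ℕ) : ℝ)⁻¹

/-- `sA a m` is the side length `s_m = a_1 ⋯ a_m` of the level `m` squares. -/
def sA (a : ℕ → ℝ) (m : ℕ) : ℝ := ∏ j ∈ Finset.range m, a j

/-- number of subdivisions of each side at step `m+1` (an odd integer `≥ 3`). -/
def nA (a : ℕ → ℝ) (m : ℕ) : ℕ := ⌊(a m)⁻¹⌋₊

/-- the axis-parallel closed square with lower-left corner `c` and side `s`. -/
def csq (c : Plane) (s : ℝ) : Set Plane :=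
  {p | p 0 ∈ Icc (c 0) (c 0 + s) ∧ p 1 ∈ Icc (c 1) (c 1 + s)}

/-- lower-left corners of the level `m` squares `𝒯_m` of the carpet construction. -/
def corners (a : ℕ → ℝ) : ℕ → Set Plane
  | 0 => {p | p 0 = 0 ∧ p 1 = 0}
  | m + 1 =>
      {p | ∃ c ∈ corners a m, ∃ i j : ℕ,
        i < nA a m ∧ j < nA a m ∧ ¬(i = (nA a m - 1) / 2 ∧ j = (nA a m - 1) / 2) ∧
        p 0 = c 0 + i * sA a (m + 1) ∧ p 1 = c 1 + j * sA a (m + 1)}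

/-- the level `m` precarpet `S_{a,m}`. -/
def precarpet (a : ℕ → ℝ) (m : ℕ) : Set Plane :=
  ⋃ c ∈ corners a m, csq c (sA a m)

/-- the carpet `S_a`. -/
def carpet (a : ℕ → ℝ) : Set Plane := ⋂ m, precarpet a m

/-- The natural measure on the carpet: the Borel probability measure giving each level `m`
square of the construction mass `∏_{j≤m} (a_j⁻² - 1)⁻¹`. -/
def IsNaturalMeasure (a : ℕ → ℝ) (μ : Measure ↥(carpet a)) : Prop :=
  IsProbabilityMeasure μ ∧
    ∀ m : ℕ, ∀ c ∈ corners a m,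
      μ (Subtype.val ⁻¹' csq c (sA a m)) =
        ENNReal.ofReal (∏ j ∈ Finset.range m, ((a j)⁻¹ ^ 2 - 1)⁻¹)

/-- `ρ` is an upper gradient of `u`: for every rectifiable curve (equivalently, every
`1`-Lipschitz parametrized curve) `γ : [0, L] → X`, `|u(γ L) - u(γ 0)| ≤ ∫_γ ρ ds`. -/
def IsUpperGradient {X : Type*} [MetricSpace X] (u : X → ℝ) (ρ : X → ℝ≥0∞) : Prop :=
  ∀ L : ℝ, 0 ≤ L → ∀ γ : ℝ → X, LipschitzOnWith 1 γ (Icc 0 L) →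
    ENNReal.ofReal |u (γ L) - u (γ 0)| ≤ ∫⁻ t in Icc 0 L, ρ (γ t)

/-- The metric measure space `(X, d, μ)` supports a `p`-Poincaré inequality. -/
def SupportsPoincare {X : Type*} [MetricSpace X] [MeasurableSpace X]
    (μ : Measure X) (p : ℝ) : Prop :=
  ∃ C : ℝ, 1 ≤ C ∧ ∃ lam : ℝ, 1 ≤ lam ∧
    ∀ u : X → ℝ, Continuous u → ∀ ρ : X → ℝ≥0∞, Measurable ρ → IsUpperGradient u ρ →
      ∀ x : X, ∀ r : ℝ, 0 < r →
        (∫⁻ y in ball x r, ENNReal.ofReal |u y - ⨍ z in ball x r, u z ∂μ| ∂μ) / μ (ball x r) ≤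
          ENNReal.ofReal (C * diam (ball x r)) *
            ((∫⁻ y in ball x (lam * r), ρ y ^ p ∂μ) / μ (ball x (lam * r))) ^ (1 / p)


section
variable {a : ℕ → ℝ}

lemma nA_spec (ha : GoodSeq a) (m : ℕ) : 3 ≤ nA a m ∧ a m = ((nA a m : ℕ) : ℝ)⁻¹ := by
  obtain ⟨k, hk, hak⟩ := ha m
  have h : (a m)⁻¹ = ((2 * k + 1 : ℕ) : ℝ) := by rw [hak, inv_inv]
  have hn : nA a m = 2 * k + 1 := by rw [nA, h, Nat.floor_natCast]
  exact ⟨by omega, by rw [hn, hak]⟩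

lemma a_pos (ha : GoodSeq a) (m : ℕ) : 0 < a m := by
  rw [(nA_spec ha m).2]; have := (nA_spec ha m).1; positivity

lemma a_le_third (ha : GoodSeq a) (m : ℕ) : a m ≤ 1/3 := by
  rw [(nA_spec ha m).2]
  have h3 : (3:ℝ) ≤ (nA a m : ℝ) := by exact_mod_cast (nA_spec ha m).1
  rw [one_div]
  exact inv_anti₀ (by norm_num) h3

lemma sA_zero : sA a 0 = 1 := by simp [sA]

lemma sA_succ (m : ℕ) : sA a (m+1) = sA a m * a m := Finset.prod_range_succ a m

lemma sA_pos (ha : GoodSeq a) (m : ℕ) : 0 < sA a m :=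
  Finset.prod_pos fun j _ => a_pos ha j

lemma nA_mul_sA (ha : GoodSeq a) (m : ℕ) : (nA a m : ℝ) * sA a (m+1) = sA a m := by
  have h := (nA_spec ha m).2
  have h3 : (3:ℝ) ≤ (nA a m : ℝ) := by exact_mod_cast (nA_spec ha m).1
  rw [sA_succ, h]; field_simp

lemma sA_le (ha : GoodSeq a) (m : ℕ) : sA a m ≤ (1/3)^m := by
  induction m with
  | zero => simp [sA_zero]
  | succ k ih =>
      rw [sA_succ, pow_succ]
      have := a_pos ha k
      have := a_le_third ha k
      have := sA_pos ha k
      nlinarith [pow_nonneg (by norm_num : (0:ℝ) ≤ 1/3) k]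

lemma exists_level (ha : GoodSeq a) {r : ℝ} (hr : 0 < r) : ∃ m, 9 * sA a m ≤ r := by
  obtain ⟨m, hm⟩ := exists_pow_lt_of_lt_one (by positivity : 0 < r/9) (by norm_num : (1:ℝ)/3 < 1)
  exact ⟨m, by have := sA_le ha m; linarith⟩

/-- auxiliary point constructor -/
def mk2 (x y : ℝ) : Plane := (WithLp.equiv 2 _).symm ![x, y]

lemma mk2_zero (x y : ℝ) : mk2 x y 0 = x := rfl
lemma mk2_one (x y : ℝ) : mk2 x y 1 = y := rfl

lemma plane_ext {p q : Plane} (h0 : p 0 = q 0) (h1 : p 1 = q 1) : p = q := by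
  ext i; fin_cases i <;> assumption

lemma abs_coord_le_dist (p q : Plane) (i : Fin 2) : |p i - q i| ≤ dist p q := by
  rw [EuclideanSpace.dist_eq]
  have h0 : dist (p i) (q i) = |p i - q i| := Real.dist_eq _ _
  calc |p i - q i| = Real.sqrt (dist (p i) (q i) ^2) := by
        rw [Real.sqrt_sq_eq_abs, h0, abs_abs]
    _ ≤ _ := Real.sqrt_le_sqrt (Finset.single_le_sum (f := fun j => dist (p j) (q j) ^ 2)
        (fun j _ => sq_nonneg _) (Finset.mem_univ i))

lemma dist_le_sum_coord (p q : Plane) : dist p q ≤ |p 0 - q 0| + |p 1 - q 1| := by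
  rw [EuclideanSpace.dist_eq, Fin.sum_univ_two, Real.dist_eq, Real.dist_eq]
  have h := abs_nonneg (p 0 - q 0); have h2 := abs_nonneg (p 1 - q 1)
  calc Real.sqrt (|p 0 - q 0| ^ 2 + |p 1 - q 1| ^ 2)
      ≤ Real.sqrt ((|p 0 - q 0| + |p 1 - q 1|)^2) := Real.sqrt_le_sqrt (by nlinarith)
    _ = _ := by rw [Real.sqrt_sq (by positivity)]

lemma measurable_csq_pre (c : Plane) (s : ℝ) :
    MeasurableSet (Subtype.val ⁻¹' csq c s : Set ↥(carpet a)) := by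
  apply MeasurableSet.preimage _ measurable_subtype_coe
  have : csq c s = (fun p : Plane => p 0) ⁻¹' (Icc (c 0) (c 0 + s)) ∩
      (fun p : Plane => p 1) ⁻¹' (Icc (c 1) (c 1 + s)) := rfl
  rw [this]
  exact (measurableSet_Icc.preimage (EuclideanSpace.proj (0:Fin 2)).continuous.measurable).inter
    (measurableSet_Icc.preimage (EuclideanSpace.proj (1:Fin 2)).continuous.measurable)

lemma mem_precarpet {x : Plane} {m : ℕ} (hx : x ∈ carpet a) :
    ∃ c ∈ corners a m, x ∈ csq c (sA a m) := by
  have : x ∈ precarpet a m := Set.mem_iInter.1 hx m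
  simpa [precarpet] using this

lemma carpet_subset_unit {x : Plane} (hx : x ∈ carpet a) :
    x 0 ∈ Icc (0:ℝ) 1 ∧ x 1 ∈ Icc (0:ℝ) 1 := by
  obtain ⟨c, hc, hxc⟩ := mem_precarpet (m := 0) hx
  obtain ⟨h0, h1⟩ : c 0 = 0 ∧ c 1 = 0 := hc
  rw [csq, Set.mem_setOf_eq, h0, h1, sA_zero] at hxc
  simpa using hxc

lemma corners_lattice (ha : GoodSeq a) {m : ℕ} {c : Plane} (hc : c ∈ corners a m) :
    ∃ u v : ℕ, c 0 = u * sA a m ∧ c 1 = v * sA a m := by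
  induction m generalizing c with
  | zero => exact ⟨0, 0, by simp [hc.1, hc.2]⟩
  | succ k ih =>
      obtain ⟨c', hc', i, j, hi, hj, hctr, h0, h1⟩ := hc
      obtain ⟨u, v, hu, hv⟩ := ih hc'
      refine ⟨u * nA a k + i, v * nA a k + j, ?_, ?_⟩
      · rw [h0, hu, ← nA_mul_sA ha k]; push_cast; ring
      · rw [h1, hv, ← nA_mul_sA ha k]; push_cast; ring

end

section
variable {a : ℕ → ℝ}

lemma measure_ball_upper (ha : GoodSeq a) {μ : MeasureTheory.Measure ↥(carpet a)}
    (hμ : IsNaturalMeasure a μ) (x : ↥(carpet a)) {R : ℝ} (hR : 0 < R) (m : ℕ) :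
    ∃ N : ℕ, (N:ℝ) ≤ (2*R/(sA a m) + 2)^2 ∧
      μ (ball x R) ≤ N * ENNReal.ofReal (∏ j ∈ Finset.range m, ((a j)⁻¹ ^ 2 - 1)⁻¹) := by
  classical
  set s := sA a m with hs_def
  have hs : 0 < s := sA_pos ha m
  set x0 := (x : Plane) 0 with hx0
  set x1 := (x : Plane) 1 with hx1
  have hxunit := carpet_subset_unit x.2
  have hx0nn : 0 ≤ x0 := hxunit.1.1
  have hx1nn : 0 ≤ x1 := hxunit.2.1
  set U := ⌊(x0 + R)/s⌋₊ with hU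
  set V := ⌊(x1 + R)/s⌋₊ with hV
  set K := ⌊2*R/s⌋₊ + 1 with hK
  set F : Finset (ℕ×ℕ) := (Finset.Icc (U-K) U) ×ˢ (Finset.Icc (V-K) V) with hF
  set F' : Finset (ℕ×ℕ) := F.filter (fun p => mk2 (p.1*s) (p.2*s) ∈ corners a m) with hF'
  -- the key coordinate bound
  have key : ∀ (z w : ℝ) (u : ℕ), 0 ≤ z → |w - z| < R → (u:ℝ)*s ≤ w → w ≤ u*s + s →
      ⌊(z + R)/s⌋₊ - K ≤ u ∧ u ≤ ⌊(z + R)/s⌋₊ := by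
    intro z w u hz habs hl hr'
    have h1 : w ≤ z + R := by cases abs_sub_lt_iff.1 habs; linarith
    have h2 : z - R < w := by cases abs_sub_lt_iff.1 habs; linarith
    have hu_le : u ≤ ⌊(z + R)/s⌋₊ := by
      apply Nat.le_floor
      rw [le_div_iff₀ hs]
      linarith
    refine ⟨?_, hu_le⟩
    have hfl : ((⌊(z + R)/s⌋₊ : ℝ)) ≤ (z + R)/s := Nat.floor_le (by positivity)
    have hKgt : 2*R/s < (K:ℝ) := by
      rw [hK]; push_cast
      exact Nat.lt_floor_add_one _
    have h3 : (z + R)/s < (u:ℝ) + 1 + 2*R/s := by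
      rw [div_lt_iff₀ hs]
      have : z - R < (u:ℝ)*s + s := lt_of_lt_of_le h2 hr'
      have h2Rs : 2*R/s * s = 2*R := by field_simp
      nlinarith
    have : (⌊(z + R)/s⌋₊ : ℝ) < (u:ℝ) + (K:ℝ) + 1 := by linarith
    have hnat : ⌊(z + R)/s⌋₊ < u + K + 1 := by exact_mod_cast this
    omega
  -- covering
  have hcover : (ball x R : Set ↥(carpet a)) ⊆
      ⋃ p ∈ F', Subtype.val ⁻¹' csq (mk2 (p.1*s) (p.2*s)) s := by
    intro y hy
    have hd : dist (y : Plane) (x : Plane) < R := by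
      rw [← Subtype.dist_eq]; exact mem_ball.1 hy
    obtain ⟨c, hc, hyc⟩ := mem_precarpet (m := m) y.2
    obtain ⟨u, v, hu, hv⟩ := corners_lattice ha hc
    have hd0 : |(y:Plane) 0 - x0| < R := lt_of_le_of_lt (abs_coord_le_dist _ _ 0) hd
    have hd1 : |(y:Plane) 1 - x1| < R := lt_of_le_of_lt (abs_coord_le_dist _ _ 1) hd
    obtain ⟨hyc0, hyc1⟩ := hyc
    have hb0 := key x0 ((y:Plane) 0) u hx0nn hd0 (by rw [← hu]; exact hyc0.1)
      (by rw [← hu]; exact hyc0.2)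
    have hb1 := key x1 ((y:Plane) 1) v hx1nn hd1 (by rw [← hv]; exact hyc1.1)
      (by rw [← hv]; exact hyc1.2)
    have hceq : mk2 ((u:ℝ)*s) ((v:ℝ)*s) = c := plane_ext (by rw [mk2_zero, hu]) (by rw [mk2_one, hv])
    have hmemF : ((u,v) : ℕ×ℕ) ∈ F' := by
      rw [hF', Finset.mem_filter]
      constructor
      · rw [hF, Finset.mem_product]
        exact ⟨Finset.mem_Icc.2 ⟨hb0.1, hb0.2⟩, Finset.mem_Icc.2 ⟨hb1.1, hb1.2⟩⟩
      · simpa [hceq] using hc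
    apply Set.mem_biUnion hmemF
    show (y : Plane) ∈ csq (mk2 ((u:ℝ)*s) ((v:ℝ)*s)) s
    rw [hceq]
    exact ⟨hyc0, hyc1⟩
  refine ⟨F.card, ?_, ?_⟩
  · have hcard : F.card = (U + 1 - (U - K)) * (V + 1 - (V - K)) := by
      rw [hF, Finset.card_product, Nat.card_Icc, Nat.card_Icc]
    have h1 : F.card ≤ (K+1) * (K+1) := by rw [hcard]; apply Nat.mul_le_mul <;> omega
    have h2 : ((K:ℝ)+1) ≤ 2*R/s + 2 := by
      rw [hK]; push_cast
      have := Nat.floor_le (by positivity : (0:ℝ) ≤ 2*R/s)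
      linarith
    calc (F.card : ℝ) ≤ ((K:ℝ)+1) * ((K:ℝ)+1) := by exact_mod_cast h1
      _ ≤ (2*R/s + 2)^2 := by nlinarith [div_nonneg (by linarith : (0:ℝ) ≤ 2*R) hs.le]
  · calc μ (ball x R) ≤ μ (⋃ p ∈ F', Subtype.val ⁻¹' csq (mk2 (p.1*s) (p.2*s)) s) :=
        MeasureTheory.measure_mono hcover
      _ ≤ ∑ p ∈ F', μ (Subtype.val ⁻¹' csq (mk2 (p.1*s) (p.2*s)) s) :=
        MeasureTheory.measure_biUnion_finset_le _ _
      _ = ∑ p ∈ F', ENNReal.ofReal (∏ j ∈ Finset.range m, ((a j)⁻¹ ^ 2 - 1)⁻¹) := by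
        apply Finset.sum_congr rfl
        intro p hp
        exact hμ.2 m _ (Finset.mem_filter.1 hp).2
      _ = F'.card * ENNReal.ofReal (∏ j ∈ Finset.range m, ((a j)⁻¹ ^ 2 - 1)⁻¹) := by
        rw [Finset.sum_const, nsmul_eq_mul]
      _ ≤ F.card * ENNReal.ofReal (∏ j ∈ Finset.range m, ((a j)⁻¹ ^ 2 - 1)⁻¹) := by
        exact mul_le_mul_left (by exact_mod_cast Finset.card_filter_le F _) _

end

section
variable {a : ℕ → ℝ}

lemma corners_succ (m : ℕ) : corners a (m+1) =
    {p : Plane | ∃ c ∈ corners a m, ∃ i j : ℕ,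
      i < nA a m ∧ j < nA a m ∧ ¬(i = (nA a m - 1) / 2 ∧ j = (nA a m - 1) / 2) ∧
      p 0 = c 0 + i * sA a (m + 1) ∧ p 1 = c 1 + j * sA a (m + 1)} := rfl

set_option maxHeartbeats 4000000 in
lemma measure_ball_lower (ha : GoodSeq a) {μ : MeasureTheory.Measure ↥(carpet a)}
    (hμ : IsNaturalMeasure a μ) (x : ↥(carpet a)) {r : ℝ} (k : ℕ)
    (h1 : 9 * sA a (k+1) ≤ r) (h2 : r < 9 * sA a k) :
    ∃ p N : ℕ, 3 ≤ p ∧ 4*r/(sA a (k+1)) + 2 ≤ 39 * p ∧ r ≤ 9 * ((p:ℝ) * sA a (k+1)) ∧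
      (p:ℝ)^2/8 ≤ N ∧
      (N : ℝ≥0∞) * ENNReal.ofReal (∏ j ∈ Finset.range (k+1), ((a j)⁻¹ ^ 2 - 1)⁻¹) ≤
        μ (ball x r) := by
  classical
  set s := sA a (k+1) with hs_def
  have hs : 0 < s := sA_pos ha (k+1)
  have hr : 0 < r := lt_of_lt_of_le (by linarith) h1
  set n := nA a k with hn_def
  have hn3 : 3 ≤ n := (nA_spec ha k).1
  have hns : (n:ℝ) * s = sA a k := nA_mul_sA ha k
  obtain ⟨c', hc', hxc'⟩ := mem_precarpet (m := k) x.2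
  set ξ := (x:Plane) 0 - c' 0 with hξ_def
  set η := (x:Plane) 1 - c' 1 with hη_def
  have hξ : 0 ≤ ξ ∧ ξ ≤ sA a k := ⟨by simp [hξ_def]; linarith [hxc'.1.1], by linarith [hxc'.1.2]⟩
  have hη : 0 ≤ η ∧ η ≤ sA a k := ⟨by simp [hη_def]; linarith [hxc'.2.1], by linarith [hxc'.2.2]⟩
  set i := min ⌊ξ/s⌋₊ (n-1) with hi_def
  set j := min ⌊η/s⌋₊ (n-1) with hj_def
  clear_value i j
  -- position of x within the level-k square, at scale s
  have hpos : ∀ (z : ℝ) (i' : ℕ), 0 ≤ z → z ≤ sA a k → i' = min ⌊z/s⌋₊ (n-1) →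
      (i':ℝ)*s ≤ z ∧ z ≤ ((i':ℝ)+1)*s := by
    intro z i' hz hz' hi'
    constructor
    · have : (i':ℝ) ≤ z/s := by
        have h1' : (i':ℕ) ≤ ⌊z/s⌋₊ := by omega
        calc (i':ℝ) ≤ (⌊z/s⌋₊:ℝ) := by exact_mod_cast h1'
          _ ≤ z/s := Nat.floor_le (by positivity)
      calc (i':ℝ)*s ≤ (z/s)*s := by nlinarith
        _ = z := by field_simp
    · rcases le_or_gt ⌊z/s⌋₊ (n-1) with h | h
      · have hie : i' = ⌊z/s⌋₊ := by omega
        have : z/s < (⌊z/s⌋₊:ℝ) + 1 := Nat.lt_floor_add_one _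
        have h2' : z < ((⌊z/s⌋₊:ℝ) + 1)*s := by
          calc z = (z/s)*s := by field_simp
            _ < ((⌊z/s⌋₊:ℝ) + 1)*s := by nlinarith
        rw [hie]; exact h2'.le
      · have hie : i' = n - 1 := by omega
        have hcast : ((i':ℝ)+1) = (n:ℝ) := by
          rw [hie]; push_cast [Nat.cast_sub (by omega : 1 ≤ n)]; ring
        rw [hcast, hns]; exact hz'
  have hix := hpos ξ i hξ.1 hξ.2 hi_def
  have hjx := hpos η j hη.1 hη.2 hj_def
  have hi_lt : i < n := by omega
  have hj_lt : j < n := by omega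
  -- the block size
  set p := min n ⌊r/(3*s)⌋₊ with hp_def
  have hfl3 : 3 ≤ ⌊r/(3*s)⌋₊ := by
    apply Nat.le_floor
    rw [le_div_iff₀ (by positivity)]
    push_cast; linarith
  have hp3 : 3 ≤ p := by omega
  have hpn : p ≤ n := by omega
  have hpfl : p ≤ ⌊r/(3*s)⌋₊ := by omega
  have hps : (p:ℝ) * s ≤ r/3 := by
    have h1' : (p:ℝ) ≤ r/(3*s) := by
      calc (p:ℝ) ≤ (⌊r/(3*s)⌋₊:ℝ) := by exact_mod_cast hpfl
        _ ≤ r/(3*s) := Nat.floor_le (by positivity)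
    calc (p:ℝ)*s ≤ (r/(3*s))*s := by nlinarith
      _ = r/3 := by field_simp
  have hp9 : r ≤ 9 * ((p:ℝ) * s) := by
    rcases le_total n ⌊r/(3*s)⌋₊ with h | h
    · have hpe : p = n := by omega
      rw [hpe, hns]; linarith
    · have hpe : p = ⌊r/(3*s)⌋₊ := by omega
      have h1' : r/(3*s) < (p:ℝ) + 1 := by rw [hpe]; exact Nat.lt_floor_add_one _
      have h9 : 1 ≤ r/(9*s) := by rw [le_div_iff₀ (by positivity)]; linarith
      have hle : r/(3*s) - r/(9*s) ≤ (p:ℝ) := by linarith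
      have heq : r/(3*s) - r/(9*s) = 2*r/(9*s) := by field_simp; ring
      rw [heq] at hle
      have := (div_le_iff₀ (by positivity : (0:ℝ) < 9*s)).1 hle
      nlinarith
  have h39 : 4*r/s + 2 ≤ 39 * (p:ℝ) := by
    rcases le_total n ⌊r/(3*s)⌋₊ with h | h
    · have hpe : p = n := by omega
      have hrn : r < 9 * ((n:ℝ)*s) := by rw [hns]; linarith
      have h4 : 4*r/s < 36*(n:ℝ) := by rw [div_lt_iff₀ hs]; nlinarith
      have hn1 : (1:ℝ) ≤ (n:ℝ) := by exact_mod_cast (by omega : 1 ≤ n)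
      rw [hpe]; linarith
    · have h4 : 4*r/s ≤ 36*(p:ℝ) := by rw [div_le_iff₀ hs]; nlinarith
      have hp1 : (1:ℝ) ≤ (p:ℝ) := by exact_mod_cast (by omega : 1 ≤ p)
      linarith
  clear_value p
  -- the even-index block
  set i0 := min i (n - p) with hi0_def
  set j0 := min j (n - p) with hj0_def
  clear_value i0 j0
  have hi0 : i0 ≤ i ∧ i < i0 + p ∧ i0 + p ≤ n := by omega
  have hj0 : j0 ≤ j ∧ j < j0 + p ∧ j0 + p ≤ n := by omega
  set q := (p+1)/2 with hq_def
  clear_value q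
  have hq2 : 2 ≤ q := by omega
  have hqp : 2*q ≤ p + 1 ∧ p ≤ 2*q := by omega
  set E := (n-1)/2 with hE_def
  clear_value E
  set S : Finset (ℕ×ℕ) := (Finset.range q) ×ˢ (Finset.range q) with hS_def
  set D : Finset (ℕ×ℕ) := S.filter
    (fun uw => ¬(i0 + 2*uw.1 = E ∧ j0 + 2*uw.2 = E)) with hD_def
  set cor : ℕ×ℕ → Plane :=
    fun uw => mk2 (c' 0 + (i0 + 2*uw.1) * s) (c' 1 + (j0 + 2*uw.2) * s) with hcor_def
  set A : ℕ×ℕ → Set ↥(carpet a) := fun uw => Subtype.val ⁻¹' csq (cor uw) s with hA_def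
  -- cardinality of D
  have hDcard : q*q - 1 ≤ D.card := by
    set F1 : Finset (ℕ×ℕ) := S.filter (fun uw => (i0 + 2*uw.1 = E ∧ j0 + 2*uw.2 = E))
      with hF1_def
    have hone : F1.card ≤ 1 := by
      apply Finset.card_le_one.2
      intro u hu v hv
      rw [hF1_def, Finset.mem_filter] at hu hv
      have h1' := hu.2; have h2' := hv.2
      have : u.1 = v.1 ∧ u.2 = v.2 := by omega
      exact Prod.ext this.1 this.2
    have hsub1 : S \ F1 ⊆ D := by
      intro uw h
      rw [Finset.mem_sdiff, hF1_def, Finset.mem_filter] at h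
      rw [hD_def, Finset.mem_filter]
      exact ⟨h.1, fun hc => h.2 ⟨h.1, hc⟩⟩
    have hge := Finset.card_le_card hsub1
    have hsd : (S \ F1).card = S.card - F1.card :=
      Finset.card_sdiff_of_subset (Finset.filter_subset _ _)
    have hcards : S.card = q*q := by
      rw [hS_def, Finset.card_product, Finset.card_range]
    omega
  -- each block cell is a corner
  have hcorner : ∀ uw ∈ D, cor uw ∈ corners a (k+1) := by
    intro uw huw
    rw [hD_def, Finset.mem_filter, hS_def, Finset.mem_product, Finset.mem_range,
      Finset.mem_range] at huw
    obtain ⟨⟨hu, hw⟩, hctr⟩ := huw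
    rw [corners_succ]
    refine ⟨c', hc', i0 + 2*uw.1, j0 + 2*uw.2, by omega, by omega, by omega, ?_, ?_⟩
    · simp only [hcor_def, mk2_zero]
      rw [← hs_def]; push_cast; ring
    · simp only [hcor_def, mk2_one]
      rw [← hs_def]; push_cast; ring
  -- each block cell is inside the ball
  have hsub : ∀ uw ∈ D, A uw ⊆ ball x r := by
    intro uw huw y hy
    rw [hD_def, Finset.mem_filter, hS_def, Finset.mem_product, Finset.mem_range,
      Finset.mem_range] at huw
    obtain ⟨⟨hu, hw⟩, -⟩ := huw
    have hymem : (y:Plane) ∈ csq (cor uw) s := hy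
    simp only [hcor_def] at hymem
    obtain ⟨hy0, hy1⟩ := hymem
    rw [mk2_zero] at hy0
    rw [mk2_one] at hy1
    have hcoord : ∀ (i' ii : ℕ) (z w α : ℝ), i' + 1 ≤ ii + p → ii + 1 ≤ i' + p →
        (α + i' * s ≤ z) → (z ≤ α + i' * s + s) →
        ((ii:ℝ)*s ≤ w) → (w ≤ ((ii:ℝ)+1)*s) → |z - (α + w)| ≤ p * s := by
      intro i' ii z w α hA1 hA2 hzl hzu hwl hwu
      have hc1 : ((i':ℝ) + 1) ≤ (ii:ℝ) + p := by exact_mod_cast hA1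
      have hc2 : ((ii:ℝ) + 1) ≤ (i':ℝ) + p := by exact_mod_cast hA2
      rw [abs_le]
      constructor <;> nlinarith
    have hb0 : |(y:Plane) 0 - ((x:Plane) 0)| ≤ p * s := by
      have hxe : (x:Plane) 0 = c' 0 + ξ := by rw [hξ_def]; ring
      rw [hxe]
      exact hcoord (i0 + 2*uw.1) i ((y:Plane) 0) ξ (c' 0) (by omega) (by omega)
        (by push_cast at hy0 ⊢; linarith [hy0.1]) (by push_cast at hy0 ⊢; linarith [hy0.2])
        hix.1 hix.2
    have hb1 : |(y:Plane) 1 - ((x:Plane) 1)| ≤ p * s := by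
      have hxe : (x:Plane) 1 = c' 1 + η := by rw [hη_def]; ring
      rw [hxe]
      exact hcoord (j0 + 2*uw.2) j ((y:Plane) 1) η (c' 1) (by omega) (by omega)
        (by push_cast at hy1 ⊢; linarith [hy1.1]) (by push_cast at hy1 ⊢; linarith [hy1.2])
        hjx.1 hjx.2
    have : dist y x < r := by
      rw [Subtype.dist_eq]
      calc dist (y:Plane) (x:Plane)
          ≤ |(y:Plane) 0 - ((x:Plane) 0)| + |(y:Plane) 1 - ((x:Plane) 1)| :=
            dist_le_sum_coord _ _
        _ ≤ 2 * ((p:ℝ)*s) := by linarith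
        _ ≤ 2 * (r/3) := by linarith
        _ < r := by linarith
    exact mem_ball.2 this
  -- pairwise disjointness
  have hdisj : (D : Set (ℕ×ℕ)).PairwiseDisjoint A := by
    intro uw _ uw' _ hne
    rw [Function.onFun, Set.disjoint_left]
    intro y hy hy'
    have h0 : (y:Plane) ∈ csq (cor uw) s := hy
    have h0' : (y:Plane) ∈ csq (cor uw') s := hy'
    simp only [hcor_def] at h0 h0'
    simp only [csq, mk2_zero, mk2_one, Set.mem_setOf_eq, Set.mem_Icc] at h0 h0'
    have hsep : ∀ (b1 b2 : ℕ) (z α : ℝ), b1 + 2 ≤ b2 →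
        α + b1*s ≤ z → z ≤ α + b1*s + s → α + b2*s ≤ z → False := by
      intro b1 b2 z α hb h1' h2' h3'
      have : (b1:ℝ) + 2 ≤ (b2:ℝ) := by exact_mod_cast hb
      nlinarith
    have hcase : uw.1 ≠ uw'.1 ∨ uw.2 ≠ uw'.2 := by
      by_contra hcon
      push_neg at hcon
      exact hne (Prod.ext hcon.1 hcon.2)
    rcases hcase with hne1 | hne1
    · rcases Nat.lt_or_ge uw.1 uw'.1 with hlt | hge
      · exact hsep (i0 + 2*uw.1) (i0 + 2*uw'.1) ((y:Plane) 0) (c' 0) (by omega)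
          (by push_cast at h0 ⊢; linarith [h0.1.1]) (by push_cast at h0 ⊢; linarith [h0.1.2])
          (by push_cast at h0' ⊢; linarith [h0'.1.1])
      · exact hsep (i0 + 2*uw'.1) (i0 + 2*uw.1) ((y:Plane) 0) (c' 0) (by omega)
          (by push_cast at h0' ⊢; linarith [h0'.1.1]) (by push_cast at h0' ⊢; linarith [h0'.1.2])
          (by push_cast at h0 ⊢; linarith [h0.1.1])
    · rcases Nat.lt_or_ge uw.2 uw'.2 with hlt | hge
      · exact hsep (j0 + 2*uw.2) (j0 + 2*uw'.2) ((y:Plane) 1) (c' 1) (by omega)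
          (by push_cast at h0 ⊢; linarith [h0.2.1]) (by push_cast at h0 ⊢; linarith [h0.2.2])
          (by push_cast at h0' ⊢; linarith [h0'.2.1])
      · exact hsep (j0 + 2*uw'.2) (j0 + 2*uw.2) ((y:Plane) 1) (c' 1) (by omega)
          (by push_cast at h0' ⊢; linarith [h0'.2.1]) (by push_cast at h0' ⊢; linarith [h0'.2.2])
          (by push_cast at h0 ⊢; linarith [h0.2.1])
  refine ⟨p, D.card, hp3, h39, hp9, ?_, ?_⟩
  · have hq2r : (p:ℝ) ≤ 2*(q:ℝ) := by exact_mod_cast (by omega : p ≤ 2*q)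
    have hc : ((q*q - 1 : ℕ):ℝ) ≤ (D.card : ℝ) := by exact_mod_cast hDcard
    have hqq : ((q*q - 1 : ℕ):ℝ) = (q:ℝ)*(q:ℝ) - 1 := by
      push_cast [Nat.cast_sub (by nlinarith : 1 ≤ q*q)]; ring
    have hp3r : (3:ℝ) ≤ (p:ℝ) := by exact_mod_cast hp3
    nlinarith
  · calc (D.card : ℝ≥0∞) * ENNReal.ofReal (∏ j ∈ Finset.range (k+1), ((a j)⁻¹ ^ 2 - 1)⁻¹)
        = ∑ uw ∈ D, ENNReal.ofReal (∏ j ∈ Finset.range (k+1), ((a j)⁻¹ ^ 2 - 1)⁻¹) := by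
          rw [Finset.sum_const, nsmul_eq_mul]
      _ = ∑ uw ∈ D, μ (A uw) := by
          apply Finset.sum_congr rfl
          intro uw huw
          exact (hμ.2 (k+1) (cor uw) (hcorner uw huw)).symm
      _ = μ (⋃ uw ∈ D, A uw) :=
          (MeasureTheory.measure_biUnion_finset hdisj (fun uw _ => measurable_csq_pre _ _)).symm
      _ ≤ μ (ball x r) := MeasureTheory.measure_mono (Set.iUnion₂_subset hsub)

end

section
variable {a : ℕ → ℝ}

lemma prod_ge_sq (ha : GoodSeq a) (m : ℕ) :
    sA a m ^ 2 ≤ ∏ j ∈ Finset.range m, ((a j)⁻¹ ^ 2 - 1)⁻¹ := by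
  have h : sA a m ^ 2 = ∏ j ∈ Finset.range m, (a j)^2 := by
    rw [sA, ← Finset.prod_pow]
  rw [h]
  apply Finset.prod_le_prod
  · intro j _; positivity
  · intro j _
    have haj := (nA_spec ha j).2
    have hn3 : (3:ℝ) ≤ (nA a j : ℝ) := by exact_mod_cast (nA_spec ha j).1
    rw [haj, inv_inv, inv_pow]
    apply inv_anti₀ <;> nlinarith

lemma ball_eq_univ_of_big (x : ↥(carpet a)) {r : ℝ} (hr : 3 ≤ r) :
    (ball x r : Set ↥(carpet a)) = Set.univ := by
  apply Set.eq_univ_of_forall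
  intro y
  apply mem_ball.2
  have hx := carpet_subset_unit x.2
  have hy := carpet_subset_unit y.2
  have h0 : |(y:Plane) 0 - ((x:Plane) 0)| ≤ 1 :=
    abs_le.2 ⟨by linarith [hx.1.1, hx.1.2, hy.1.1, hy.1.2],
      by linarith [hx.1.1, hx.1.2, hy.1.1, hy.1.2]⟩
  have h1 : |(y:Plane) 1 - ((x:Plane) 1)| ≤ 1 :=
    abs_le.2 ⟨by linarith [hx.2.1, hx.2.2, hy.2.1, hy.2.2],
      by linarith [hx.2.1, hx.2.2, hy.2.1, hy.2.2]⟩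
  have : dist y x < 3 := by
    rw [Subtype.dist_eq]
    calc dist (y:Plane) (x:Plane)
        ≤ |(y:Plane) 0 - ((x:Plane) 0)| + |(y:Plane) 1 - ((x:Plane) 1)| := dist_le_sum_coord _ _
      _ ≤ 1 + 1 := add_le_add h0 h1
      _ < 3 := by norm_num
  linarith

end

/-- (i) The natural measure `μ` on `S_a` is doubling, with doubling constant independent
of `a`; (ii) there is an absolute constant `c > 0` with `μ(B(x,r)) ≥ c r²` for all
`x ∈ S_a` and `0 < r ≤ 1`. -/
theorem carpet_measure_doubling_and_lower_mass_bound :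
    (∃ C : ℝ, 0 < C ∧
      ∀ a : ℕ → ℝ, GoodSeq a → ∀ μ : Measure ↥(carpet a), IsNaturalMeasure a μ →
        ∀ (x : ↥(carpet a)) (r : ℝ), 0 < r →
          μ (ball x (2 * r)) ≤ ENNReal.ofReal C * μ (ball x r)) ∧
    (∃ c : ℝ, 0 < c ∧
      ∀ a : ℕ → ℝ, GoodSeq a → ∀ μ : Measure ↥(carpet a), IsNaturalMeasure a μ →
        ∀ (x : ↥(carpet a)) (r : ℝ), 0 < r → r ≤ 1 →
          ENNReal.ofReal (c * r ^ 2) ≤ μ (ball x r)) := by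
  constructor
  · refine ⟨12168, by norm_num, ?_⟩
    intro a ha μ hμ x r hr
    haveI := hμ.1
    classical
    by_cases hbig : 3 ≤ r
    · calc μ (ball x (2*r)) ≤ 1 := MeasureTheory.prob_le_one
        _ = μ (ball x r) := by rw [ball_eq_univ_of_big x hbig, MeasureTheory.measure_univ]
        _ = 1 * μ (ball x r) := (one_mul _).symm
        _ ≤ ENNReal.ofReal 12168 * μ (ball x r) := by
            apply mul_le_mul_left
            rw [show (1:ℝ≥0∞) = ENNReal.ofReal 1 by simp]
            exact ENNReal.ofReal_le_ofReal (by norm_num)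
    · push_neg at hbig
      have hex : ∃ m, 9 * sA a m ≤ r := exists_level ha hr
      have hm : 9 * sA a (Nat.find hex) ≤ r := Nat.find_spec hex
      have hm0 : Nat.find hex ≠ 0 := by
        intro h0
        rw [h0, sA_zero] at hm
        linarith
      obtain ⟨k, hk⟩ := Nat.exists_eq_succ_of_ne_zero hm0
      have h2 : r < 9 * sA a k := not_le.1 (Nat.find_min hex (by omega))
      rw [hk] at hm
      obtain ⟨p, N2, hp3, h39, hp9, hpN, hlow⟩ := measure_ball_lower ha hμ x k hm h2
      obtain ⟨N1, hN1, hup⟩ := measure_ball_upper ha hμ x (R := 2*r) (by linarith) (k+1)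
      have hs : 0 < sA a (k+1) := sA_pos ha (k+1)
      have hkey : (N1:ℝ) ≤ 12168 * N2 := by
        have he : 2*(2*r)/(sA a (k+1)) + 2 = 4*r/(sA a (k+1)) + 2 := by ring_nf
        rw [he] at hN1
        have ht0 : (0:ℝ) ≤ 4*r/(sA a (k+1)) + 2 := by positivity
        have hp0 : (0:ℝ) ≤ (p:ℝ) := Nat.cast_nonneg p
        have hsq : (4*r/(sA a (k+1)) + 2)^2 ≤ (39*(p:ℝ))^2 := by nlinarith
        have h1' : (N1:ℝ) ≤ 1521 * (p:ℝ)^2 := by nlinarith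
        linarith
      calc μ (ball x (2*r))
          ≤ N1 * ENNReal.ofReal (∏ j ∈ Finset.range (k+1), ((a j)⁻¹ ^ 2 - 1)⁻¹) := hup
        _ ≤ ENNReal.ofReal 12168 *
            ((N2:ℝ≥0∞) * ENNReal.ofReal (∏ j ∈ Finset.range (k+1), ((a j)⁻¹ ^ 2 - 1)⁻¹)) := by
            rw [← mul_assoc]
            apply mul_le_mul_left
            calc (N1 : ℝ≥0∞) = ENNReal.ofReal (N1:ℝ) := (ENNReal.ofReal_natCast N1).symm
              _ ≤ ENNReal.ofReal (12168 * (N2:ℝ)) := ENNReal.ofReal_le_ofReal hkey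
              _ = ENNReal.ofReal 12168 * ENNReal.ofReal (N2:ℝ) :=
                  ENNReal.ofReal_mul (by norm_num)
              _ = ENNReal.ofReal 12168 * (N2:ℝ≥0∞) := by rw [ENNReal.ofReal_natCast]
        _ ≤ ENNReal.ofReal 12168 * μ (ball x r) := mul_le_mul_right hlow _
  · refine ⟨1/648, by norm_num, ?_⟩
    intro a ha μ hμ x r hr hr1
    classical
    have hex : ∃ m, 9 * sA a m ≤ r := exists_level ha hr
    have hm : 9 * sA a (Nat.find hex) ≤ r := Nat.find_spec hex
    have hm0 : Nat.find hex ≠ 0 := by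
      intro h0
      rw [h0, sA_zero] at hm
      linarith
    obtain ⟨k, hk⟩ := Nat.exists_eq_succ_of_ne_zero hm0
    have h2 : r < 9 * sA a k := not_le.1 (Nat.find_min hex (by omega))
    rw [hk] at hm
    obtain ⟨p, N2, hp3, h39, hp9, hpN, hlow⟩ := measure_ball_lower ha hμ x k hm h2
    have hs : 0 < sA a (k+1) := sA_pos ha (k+1)
    have hreal : 1/648 * r^2 ≤ (N2:ℝ) * sA a (k+1)^2 := by
      have h1' : r^2 ≤ 81 * ((p:ℝ)*sA a (k+1))^2 := by nlinarith
      have h2' : (p:ℝ)^2/8 * sA a (k+1)^2 ≤ (N2:ℝ) * sA a (k+1)^2 := by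
        nlinarith [sq_nonneg (sA a (k+1))]
      nlinarith
    calc ENNReal.ofReal (1/648 * r^2)
        ≤ ENNReal.ofReal ((N2:ℝ) * sA a (k+1)^2) := ENNReal.ofReal_le_ofReal hreal
      _ = (N2:ℝ≥0∞) * ENNReal.ofReal (sA a (k+1)^2) := by
          rw [ENNReal.ofReal_mul (Nat.cast_nonneg _), ENNReal.ofReal_natCast]
      _ ≤ (N2:ℝ≥0∞) * ENNReal.ofReal (∏ j ∈ Finset.range (k+1), ((a j)⁻¹ ^ 2 - 1)⁻¹) :=
          mul_le_mul_right (ENNReal.ofReal_le_ofReal (prod_ge_sq ha (k+1))) _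
      _ ≤ μ (ball x r) := hlow


end
end

section
/- Let a = (a_1, a_2, …) be a sequence in which each a_m is the reciprocal of an odd integer at least 3, let S_a ⊂ ℝ² be the associated carpet, and let C_a = S_a ∩ ({1/2} × [0,1]) be the vertical Cantor set separating the left and right halves of S_a. Then the one-dimensional Hausdorff measure of C_a is positive if and only if ∑_m a_m < ∞ (i.e. a ∈ ℓ¹). -/
open MeasureTheory Metric Set Filter
open scoped ENNReal NNReal Topology

noncomputable section

namespace CarpetAux
variable {a : ℕ → ℝ}

lemma exists_k (ha : GoodSeq a) (m : ℕ) :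
    ∃ k : ℕ, 1 ≤ k ∧ a m = ((2 * k + 1 : ℕ) : ℝ)⁻¹ ∧ nA a m = 2 * k + 1 := by
  obtain ⟨k, hk, ham⟩ := ha m
  refine ⟨k, hk, ham, ?_⟩
  have h : (a m)⁻¹ = ((2 * k + 1 : ℕ) : ℝ) := by rw [ham, inv_inv]
  rw [nA, h, Nat.floor_natCast]

lemma a_pos (ha : GoodSeq a) (m : ℕ) : 0 < a m := by
  obtain ⟨k, hk, ham, _⟩ := exists_k ha m
  rw [ham]; positivity

lemma a_le (ha : GoodSeq a) (m : ℕ) : a m ≤ 1/3 := by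
  obtain ⟨k, hk, ham, _⟩ := exists_k ha m
  rw [ham, show (1:ℝ)/3 = (3:ℝ)⁻¹ by norm_num]
  apply inv_anti₀ (by norm_num)
  have : (1:ℝ) ≤ (k:ℝ) := by exact_mod_cast hk
  push_cast; linarith

lemma n_mul_a (ha : GoodSeq a) (m : ℕ) : (nA a m : ℝ) * a m = 1 := by
  obtain ⟨k, hk, ham, hn⟩ := exists_k ha m
  rw [ham, hn]
  exact mul_inv_cancel₀ (by positivity)

lemma n_ge (ha : GoodSeq a) (m : ℕ) : 3 ≤ nA a m := by
  obtain ⟨k, hk, _, hn⟩ := exists_k ha m; omega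

lemma sA_zero : sA a 0 = 1 := Finset.prod_range_zero a
lemma sA_succ (m : ℕ) : sA a (m + 1) = sA a m * a m := Finset.prod_range_succ a m
lemma sA_pos (ha : GoodSeq a) (m : ℕ) : 0 < sA a m :=
  Finset.prod_pos fun j _ => a_pos ha j
lemma n_mul_sA (ha : GoodSeq a) (m : ℕ) : (nA a m : ℝ) * sA a (m + 1) = sA a m := by
  rw [sA_succ, show (nA a m : ℝ) * (sA a m * a m) = sA a m * ((nA a m : ℝ) * a m) by ring,
    n_mul_a ha, mul_one]


def mids (a : ℕ → ℝ) : ℕ → Finset ℝ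
  | 0 => {0}
  | m + 1 =>
      ((mids a m) ×ˢ ((Finset.range (nA a m)).filter fun j => j ≠ (nA a m - 1) / 2)).image
        fun p => p.1 + (p.2 : ℝ) * sA a (m + 1)

lemma mem_mids_succ {y : ℝ} {m : ℕ} :
    y ∈ mids a (m + 1) ↔ ∃ z ∈ mids a m, ∃ j : ℕ, j < nA a m ∧ j ≠ (nA a m - 1) / 2 ∧
      y = z + (j : ℝ) * sA a (m + 1) := by
  simp only [mids, Finset.mem_image, Finset.mem_product, Finset.mem_filter, Finset.mem_range,
    Prod.exists]
  constructor
  · rintro ⟨z, j, ⟨hz, hj, hjne⟩, rfl⟩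
    exact ⟨z, hz, j, hj, hjne, rfl⟩
  · rintro ⟨z, hz, j, hj, hjne, rfl⟩
    exact ⟨z, j, ⟨hz, hj, hjne⟩, rfl⟩

lemma mids_bounds (ha : GoodSeq a) : ∀ m, ∀ y ∈ mids a m, 0 ≤ y ∧ y + sA a m ≤ 1 := by
  intro m
  induction m with
  | zero => intro y hy; simp only [mids, Finset.mem_singleton] at hy; simp [hy, sA_zero]
  | succ m ih =>
    intro y hy
    obtain ⟨z, hz, j, hj, -, rfl⟩ := mem_mids_succ.1 hy
    obtain ⟨hz0, hz1⟩ := ih z hz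
    have hs := sA_pos ha (m + 1)
    have hjn : (j : ℝ) + 1 ≤ (nA a m : ℝ) := by exact_mod_cast hj
    have hns := n_mul_sA ha m
    constructor
    · positivity
    · nlinarith [hs]

lemma mids_sep (ha : GoodSeq a) :
    ∀ m, ∀ y ∈ mids a m, ∀ z ∈ mids a m, y ≠ z → sA a m ≤ |y - z| := by
  intro m
  induction m with
  | zero =>
    intro y hy z hz hne
    simp only [mids, Finset.mem_singleton] at hy hz
    exact absurd (hy.trans hz.symm) hne
  | succ m ih =>
    intro y hy z hz hne
    obtain ⟨y1, hy1, j1, hj1, -, rfl⟩ := mem_mids_succ.1 hy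
    obtain ⟨y2, hy2, j2, hj2, -, rfl⟩ := mem_mids_succ.1 hz
    have hs := sA_pos ha (m + 1)
    have hns := n_mul_sA ha m
    by_cases hyy : y1 = y2
    · subst hyy
      have hjj : j1 ≠ j2 := by rintro rfl; exact hne rfl
      have h1 : (1 : ℝ) ≤ |(j1 : ℝ) - (j2 : ℝ)| := by
        rcases (by omega : j2 + 1 ≤ j1 ∨ j1 + 1 ≤ j2) with h | h
        · have : (j2:ℝ) + 1 ≤ j1 := by exact_mod_cast h
          rw [abs_of_nonneg (by linarith)]; linarith
        · have : (j1:ℝ) + 1 ≤ j2 := by exact_mod_cast h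
          rw [abs_of_nonpos (by linarith)]; linarith
      have : y1 + (j1:ℝ) * sA a (m+1) - (y1 + (j2:ℝ) * sA a (m+1))
          = ((j1:ℝ) - j2) * sA a (m+1) := by ring
      rw [this, abs_mul, abs_of_pos hs]
      nlinarith
    · have hsep := ih y1 hy1 y2 hy2 hyy
      have hd1 : |(j1:ℝ) - (j2:ℝ)| ≤ (nA a m : ℝ) - 1 := by
        rw [abs_le]
        have h1 : (j1 : ℝ) ≤ (nA a m : ℝ) - 1 := by
          have : (j1:ℝ) + 1 ≤ (nA a m : ℝ) := by exact_mod_cast hj1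
          linarith
        have h2 : (j2 : ℝ) ≤ (nA a m : ℝ) - 1 := by
          have : (j2:ℝ) + 1 ≤ (nA a m : ℝ) := by exact_mod_cast hj2
          linarith
        constructor <;> [nlinarith [Nat.cast_nonneg (α := ℝ) j2];
          nlinarith [Nat.cast_nonneg (α := ℝ) j1]]
      have habs : |((j1:ℝ) - j2) * sA a (m+1)| ≤ sA a m - sA a (m+1) := by
        rw [abs_mul, abs_of_pos hs]
        nlinarith
      calc sA a (m + 1) = sA a m - (sA a m - sA a (m+1)) := by ring
        _ ≤ |y1 - y2| - |((j1:ℝ) - j2) * sA a (m+1)| := by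
            have := habs; linarith [hsep]
        _ ≤ |(y1 - y2) + ((j1:ℝ) - j2) * sA a (m+1)| := by
            have := abs_add_le ((y1 - y2) + ((j1:ℝ) - j2) * sA a (m+1)) (-(((j1:ℝ) - j2) * sA a (m+1)))
            simp only [add_neg_cancel_right, abs_neg] at this
            linarith
        _ = |y1 + (j1:ℝ) * sA a (m+1) - (y2 + (j2:ℝ) * sA a (m+1))| := by ring_nf


lemma mids_card (ha : GoodSeq a) :
    ∀ m, ((mids a m).card : ℝ) * sA a m = ∏ j ∈ Finset.range m, (1 - a j) := by
  intro m
  induction m with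
  | zero => simp [mids, sA_zero]
  | succ m ih =>
    have hs := sA_pos ha (m + 1)
    have hsm := sA_pos ha m
    have hns := n_mul_sA ha m
    have hn3 := n_ge ha m
    -- injectivity of the image map
    have hinj : Set.InjOn (fun p : ℝ × ℕ => p.1 + (p.2 : ℝ) * sA a (m + 1))
        ↑((mids a m) ×ˢ ((Finset.range (nA a m)).filter fun j => j ≠ (nA a m - 1) / 2)) := by
      rintro ⟨y1, j1⟩ h1 ⟨y2, j2⟩ h2 heq
      simp only [Finset.coe_product, Finset.mem_coe, Set.mem_prod, Finset.mem_product,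
        Finset.mem_filter, Finset.mem_range] at h1 h2
      obtain ⟨hy1, hj1, -⟩ := h1
      obtain ⟨hy2, hj2, -⟩ := h2
      simp only at heq
      by_cases hyy : y1 = y2
      · subst hyy
        have : (j1 : ℝ) = j2 := by
          have := mul_right_cancel₀ (ne_of_gt hs) (by linarith : (j1:ℝ) * sA a (m+1) = (j2:ℝ) * sA a (m+1))
          exact this
        have : j1 = j2 := by exact_mod_cast this
        simp [this]
      · exfalso
        have hsep := mids_sep ha m y1 hy1 y2 hy2 hyy
        have h1' : (j1:ℝ) ≤ (nA a m : ℝ) - 1 := by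
          have : (j1:ℝ) + 1 ≤ (nA a m : ℝ) := by exact_mod_cast hj1
          linarith
        have h2' : (j2:ℝ) ≤ (nA a m : ℝ) - 1 := by
          have : (j2:ℝ) + 1 ≤ (nA a m : ℝ) := by exact_mod_cast hj2
          linarith
        have heq' : y1 - y2 = ((j2:ℝ) - j1) * sA a (m+1) := by linarith
        have habs : |y1 - y2| ≤ ((nA a m : ℝ) - 1) * sA a (m+1) := by
          rw [heq', abs_mul, abs_of_pos hs]
          have : |(j2:ℝ) - j1| ≤ (nA a m : ℝ) - 1 := by
            rw [abs_le]
            constructor <;> nlinarith [Nat.cast_nonneg (α := ℝ) j1, Nat.cast_nonneg (α := ℝ) j2]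
          nlinarith
        nlinarith
    have hcard : (mids a (m+1)).card = (mids a m).card * (nA a m - 1) := by
      rw [show mids a (m+1) = ((mids a m) ×ˢ ((Finset.range (nA a m)).filter
          fun j => j ≠ (nA a m - 1) / 2)).image (fun p => p.1 + (p.2 : ℝ) * sA a (m + 1)) from rfl,
        Finset.card_image_of_injOn hinj, Finset.card_product]
      congr 1
      rw [Finset.filter_ne', Finset.card_erase_of_mem (by
        simp only [Finset.mem_range]; omega), Finset.card_range]
    rw [Finset.prod_range_succ, ← ih, hcard, sA_succ]
    have hcast : ((((mids a m).card) * (nA a m - 1) : ℕ) : ℝ)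
        = ((mids a m).card : ℝ) * ((nA a m : ℝ) - 1) := by
      push_cast [Nat.cast_sub (by omega : 1 ≤ nA a m)]
      ring
    rw [hcast]
    have h : (nA a m : ℝ) * (sA a m * a m) = sA a m := by rw [← sA_succ]; exact hns
    linear_combination ((mids a m).card : ℝ) * h

/-- the level-`m` slice set on the line. -/
def Ey (a : ℕ → ℝ) (m : ℕ) : Set ℝ := ⋃ y ∈ mids a m, Icc y (y + sA a m)

lemma Ey_zero : Ey a 0 = Icc 0 1 := by
  simp [Ey, mids, sA_zero]

lemma Ey_meas (m : ℕ) : MeasurableSet (Ey a m) :=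
  (mids a m).measurableSet_biUnion fun _ _ => measurableSet_Icc

lemma Ey_antitone (ha : GoodSeq a) : Antitone (Ey a) := by
  apply antitone_nat_of_succ_le
  intro m x hx
  simp only [Ey, mem_iUnion, exists_prop] at hx ⊢
  obtain ⟨y, hy, hx1, hx2⟩ := hx
  obtain ⟨z, hz, j, hj, -, rfl⟩ := mem_mids_succ.1 hy
  refine ⟨z, hz, ?_, ?_⟩
  · have hs := sA_pos ha (m+1)
    nlinarith [Nat.cast_nonneg (α := ℝ) j]
  · have hs := sA_pos ha (m+1)
    have hns := n_mul_sA ha m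
    have hjn : (j:ℝ) + 1 ≤ (nA a m : ℝ) := by exact_mod_cast hj
    nlinarith

lemma volume_Ey (ha : GoodSeq a) (m : ℕ) :
    volume (Ey a m) = ENNReal.ofReal (∏ j ∈ Finset.range m, (1 - a j)) := by
  have hs := sA_pos ha m
  have hdisj : Set.Pairwise ↑(mids a m)
      (Function.onFun (AEDisjoint volume) fun y => Icc y (y + sA a m)) := by
    intro y hy z hz hyz
    simp only [Function.onFun, AEDisjoint]
    have hsep := mids_sep ha m y (Finset.mem_coe.1 hy) z (Finset.mem_coe.1 hz) hyz
    have h0 : Icc y (y + sA a m) ∩ Icc z (z + sA a m)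
        = Icc (max y z) (min (y + sA a m) (z + sA a m)) := Icc_inter_Icc
    rw [h0, Real.volume_Icc, ENNReal.ofReal_eq_zero]
    rcases abs_cases (y - z) with ⟨he, -⟩ | ⟨he, -⟩ <;> rw [he] at hsep
    · -- z + s ≤ y, so min ≤ z + s ≤ y ≤ max
      have : min (y + sA a m) (z + sA a m) ≤ max y z := by
        calc min (y + sA a m) (z + sA a m) ≤ z + sA a m := min_le_right _ _
          _ ≤ y := by linarith
          _ ≤ max y z := le_max_left _ _
      linarith
    · have : min (y + sA a m) (z + sA a m) ≤ max y z := by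
        calc min (y + sA a m) (z + sA a m) ≤ y + sA a m := min_le_left _ _
          _ ≤ z := by linarith
          _ ≤ max y z := le_max_right _ _
      linarith
  rw [Ey, measure_biUnion_finset₀ hdisj (fun _ _ => measurableSet_Icc.nullMeasurableSet)]
  have : ∀ y ∈ mids a m, volume (Icc y (y + sA a m)) = ENNReal.ofReal (sA a m) := by
    intro y _; rw [Real.volume_Icc]; congr 1; ring
  rw [Finset.sum_congr rfl this, Finset.sum_const, nsmul_eq_mul, ← mids_card ha m,
    ENNReal.ofReal_mul (by positivity), ENNReal.ofReal_natCast]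


end CarpetAux

namespace CarpetAux
variable {a : ℕ → ℝ}

def mkP (x y : ℝ) : Plane := WithLp.toLp 2 ![x, y]

/-- a corner whose square meets the vertical line `x = 1/2` is a middle-column corner. -/
lemma corners_middle (ha : GoodSeq a) :
    ∀ m, ∀ c ∈ corners a m, c 0 ≤ 1/2 → 1/2 ≤ c 0 + sA a m →
      c 0 = 1/2 - sA a m / 2 ∧ c 1 ∈ mids a m := by
  intro m
  induction m with
  | zero =>
    rintro c ⟨h0, h1⟩ - -
    rw [sA_zero, h0, h1]
    exact ⟨by norm_num, by simp [mids]⟩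
  | succ m ih =>
    rintro c ⟨c', hc', i, j, hi, hj, hnot, h0, h1⟩ hle hge
    obtain ⟨k, hk1, -, hn⟩ := exists_k ha m
    have hs := sA_pos ha (m + 1)
    have hsm := sA_pos ha m
    have hns := n_mul_sA ha m
    have hin : (i:ℝ) + 1 ≤ (nA a m : ℝ) := by exact_mod_cast hi
    have hc'le : c' 0 ≤ 1/2 := by
      have : (0:ℝ) ≤ (i:ℝ) * sA a (m+1) := by positivity
      linarith [h0 ▸ hle]
    have hc'ge : 1/2 ≤ c' 0 + sA a m := by
      have : c 0 + sA a (m+1) ≤ c' 0 + sA a m := by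
        rw [h0]; nlinarith
      linarith
    obtain ⟨hmid, hc'm⟩ := ih c' hc' hc'le hc'ge
    -- deduce i = k
    have hnr : (nA a m : ℝ) = 2 * k + 1 := by exact_mod_cast hn
    have hik : i = k := by
      have hle' : (i:ℝ) * sA a (m+1) ≤ sA a m / 2 := by
        rw [h0, hmid] at hle; linarith
      have hge' : sA a m / 2 ≤ ((i:ℝ) + 1) * sA a (m+1) := by
        rw [h0, hmid] at hge; linarith
      rw [← hns, hnr] at hle' hge'
      have h1' : (i:ℝ) ≤ (k:ℝ) + 1/2 := by nlinarith
      have h2' : (k:ℝ) - 1/2 ≤ (i:ℝ) := by nlinarith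
      have h1'' : i ≤ k := by
        by_contra hcon
        have : (k:ℝ) + 1 ≤ (i:ℝ) := by exact_mod_cast (by omega : k + 1 ≤ i)
        linarith
      have h2'' : k ≤ i := by
        by_contra hcon
        have : (i:ℝ) + 1 ≤ (k:ℝ) := by exact_mod_cast (by omega : i + 1 ≤ k)
        linarith
      omega
    have hjne : j ≠ (nA a m - 1) / 2 := by
      intro hjm; exact hnot ⟨by omega, hjm⟩
    constructor
    · rw [h0, hmid, hik, ← hns, hnr]
      push_cast
      ring
    · rw [h1]
      exact mem_mids_succ.2 ⟨c' 1, hc'm, j, hj, hjne, rfl⟩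


@[simp] lemma mkP_zero (x y : ℝ) : mkP x y 0 = x := rfl
@[simp] lemma mkP_one (x y : ℝ) : mkP x y 1 = y := rfl

/-- every middle element gives an actual corner. -/
lemma middle_corner_exists (ha : GoodSeq a) :
    ∀ m, ∀ y ∈ mids a m, ∃ c ∈ corners a m, c 0 = 1/2 - sA a m / 2 ∧ c 1 = y := by
  intro m
  induction m with
  | zero =>
    intro y hy
    simp only [mids, Finset.mem_singleton] at hy
    exact ⟨mkP 0 0, ⟨rfl, rfl⟩, by rw [sA_zero]; norm_num, by simp [hy]⟩
  | succ m ih =>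
    intro y hy
    obtain ⟨z, hz, j, hj, hjne, rfl⟩ := mem_mids_succ.1 hy
    obtain ⟨c, hc, hc0, hc1⟩ := ih z hz
    obtain ⟨k, hk1, -, hn⟩ := exists_k ha m
    have hns := n_mul_sA ha m
    have hnr : (nA a m : ℝ) = 2 * k + 1 := by exact_mod_cast hn
    refine ⟨mkP (c 0 + ((nA a m - 1) / 2 : ℕ) * sA a (m+1)) (c 1 + j * sA a (m+1)),
      ⟨c, hc, (nA a m - 1) / 2, j, by omega, hj, fun h => hjne h.2, rfl, rfl⟩, ?_, ?_⟩
    · have hmid : ((nA a m - 1) / 2 : ℕ) = k := by omega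
      rw [mkP_zero, hc0, hmid, ← hns, hnr]
      push_cast
      ring
    · rw [mkP_one, hc1]

/-- identification of the central cantor slice. -/
lemma slice_eq (ha : GoodSeq a) :
    carpet a ∩ {p : Plane | p 0 = 1 / 2 ∧ p 1 ∈ Icc (0 : ℝ) 1}
      = (fun y : ℝ => mkP (1/2) y) '' (⋂ m, Ey a m) := by
  ext p
  constructor
  · rintro ⟨hcar, hp0, hp1⟩
    refine ⟨p 1, ?_, ?_⟩
    · rw [mem_iInter]
      intro m
      have hm : p ∈ precarpet a m := (mem_iInter.1 hcar) m
      simp only [precarpet, mem_iUnion, exists_prop] at hm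
      obtain ⟨c, hc, hsq⟩ := hm
      obtain ⟨⟨hx1, hx2⟩, hy1, hy2⟩ := hsq
      rw [hp0] at hx1 hx2
      obtain ⟨-, hcm⟩ := corners_middle ha m c hc hx1 hx2
      simp only [Ey, mem_iUnion, exists_prop]
      exact ⟨c 1, hcm, hy1, hy2⟩
    · ext i; fin_cases i <;> simp [mkP, hp0]
  · rintro ⟨y, hy, rfl⟩
    have hy0 : y ∈ Icc (0:ℝ) 1 := by
      have := (mem_iInter.1 hy) 0
      rwa [Ey_zero] at this
    refine ⟨?_, rfl, hy0⟩
    rw [carpet, mem_iInter]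
    intro m
    have hym : y ∈ Ey a m := (mem_iInter.1 hy) m
    simp only [Ey, mem_iUnion, exists_prop] at hym
    obtain ⟨z, hz, hy1, hy2⟩ := hym
    obtain ⟨c, hc, hc0, hc1⟩ := middle_corner_exists ha m z hz
    simp only [precarpet, mem_iUnion, exists_prop]
    have hsm := sA_pos ha m
    refine ⟨c, hc, ⟨?_, ?_⟩, ?_, ?_⟩ <;> simp only [mkP_zero, mkP_one, hc0, hc1] <;> linarith


lemma hK (ha : GoodSeq a) :
    μH[(1 : ℝ)] (carpet a ∩ {p : Plane | p 0 = 1 / 2 ∧ p 1 ∈ Icc (0 : ℝ) 1})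
      = ENNReal.ofReal (⨅ m, ∏ j ∈ Finset.range m, (1 - a j)) := by
  rw [slice_eq ha]
  have hiso : Isometry (fun y : ℝ => mkP (1/2) y) := by
    intro p q
    simp [edist_dist, EuclideanSpace.dist_eq, mkP, Fin.sum_univ_two, Real.dist_eq,
      Real.sqrt_sq_eq_abs]
  rw [hiso.hausdorffMeasure_image (Or.inl one_pos.le), MeasureTheory.hausdorffMeasure_real,
    Antitone.measure_iInter (Ey_antitone ha)
      (fun m => (Ey_meas m).nullMeasurableSet)
      ⟨0, by rw [volume_Ey ha 0]; simp⟩]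
  simp only [volume_Ey ha]
  rw [ENNReal.ofReal_iInf]

lemma exp_neg_two_le (x : ℝ) (hx0 : 0 ≤ x) (hx : x ≤ 1/3) : Real.exp (-(2*x)) ≤ 1 - x := by
  have h1 : 1 + 2*x ≤ Real.exp (2*x) := by linarith [Real.add_one_le_exp (2*x)]
  have h2 : Real.exp (-(2*x)) = (Real.exp (2*x))⁻¹ := by rw [Real.exp_neg]
  rw [h2]
  have h3 : (Real.exp (2*x))⁻¹ ≤ (1 + 2*x)⁻¹ := by
    apply inv_anti₀ (by linarith) h1
  have h4 : (1 + 2*x)⁻¹ ≤ 1 - x := by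
    have hpos : (0:ℝ) < 1 + 2*x := by linarith
    have hmul : (1 + 2*x) * (1 + 2*x)⁻¹ = 1 := mul_inv_cancel₀ (ne_of_gt hpos)
    nlinarith [inv_nonneg.2 hpos.le]
  linarith


lemma pos_iff (ha : GoodSeq a) :
    0 < ⨅ m : ℕ, ∏ j ∈ Finset.range m, (1 - a j) ↔ Summable a := by
  set P : ℕ → ℝ := fun m => ∏ j ∈ Finset.range m, (1 - a j) with hP
  have hfac : ∀ j, 0 < 1 - a j := fun j => by linarith [a_le ha j]
  have hPpos : ∀ m, 0 < P m := fun m => Finset.prod_pos fun j _ => hfac j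
  have hbdd : BddBelow (Set.range P) := ⟨0, by rintro x ⟨m, rfl⟩; exact (hPpos m).le⟩
  constructor
  · intro hL
    set L := ⨅ m : ℕ, P m with hLdef
    apply summable_of_sum_range_le (c := -Real.log L) (fun n => (a_pos ha n).le)
    intro n
    have h1 : L ≤ P n := ciInf_le hbdd n
    have h2 : P n ≤ Real.exp (-(∑ j ∈ Finset.range n, a j)) := by
      rw [← Finset.sum_neg_distrib, Real.exp_sum]
      apply Finset.prod_le_prod (fun j _ => (hfac j).le)
      intro j _
      linarith [Real.add_one_le_exp (-(a j))]
    have h3 : Real.log L ≤ -(∑ j ∈ Finset.range n, a j) := by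
      calc Real.log L ≤ Real.log (Real.exp (-(∑ j ∈ Finset.range n, a j))) :=
            Real.log_le_log hL (h1.trans h2)
        _ = -(∑ j ∈ Finset.range n, a j) := Real.log_exp _
    linarith
  · intro hsum
    have hT : ∀ m, ∑ j ∈ Finset.range m, a j ≤ ∑' j, a j := fun m =>
      Summable.sum_le_tsum _ (fun j _ => (a_pos ha j).le) hsum
    have key : ∀ m, Real.exp (-(2 * ∑' j, a j)) ≤ P m := by
      intro m
      have h1 : Real.exp (-(2 * ∑' j, a j)) ≤ Real.exp (-(2 * ∑ j ∈ Finset.range m, a j)) := by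
        apply Real.exp_le_exp.2; linarith [hT m]
      refine h1.trans ?_
      have h2 : Real.exp (-(2 * ∑ j ∈ Finset.range m, a j))
          = ∏ j ∈ Finset.range m, Real.exp (-(2 * a j)) := by
        rw [← Real.exp_sum]
        congr 1
        rw [Finset.mul_sum, ← Finset.sum_neg_distrib]
      rw [h2]
      apply Finset.prod_le_prod (fun j _ => (Real.exp_pos _).le)
      exact fun j _ => exp_neg_two_le (a j) (a_pos ha j).le (a_le ha j)
    calc (0:ℝ) < Real.exp (-(2 * ∑' j, a j)) := Real.exp_pos _
      _ ≤ ⨅ m : ℕ, P m := le_ciInf key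

end CarpetAux

/-- The central Cantor set `C_a = S_a ∩ ({1/2} × [0,1])` has positive length (one-dimensional
Hausdorff measure) if and only if `a ∈ ℓ¹`. -/
theorem carpet_central_cantor_set_positive_length_iff (a : ℕ → ℝ) (ha : GoodSeq a) :
    0 < μH[(1 : ℝ)]
        (carpet a ∩ {p : Plane | p 0 = 1 / 2 ∧ p 1 ∈ Icc (0 : ℝ) 1}) ↔
      Summable a := by
  rw [CarpetAux.hK ha, ENNReal.ofReal_pos]
  exact CarpetAux.pos_iff ha

end
end
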